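/- arXiv:math/0702337 — 2 statements merged into one kernel-verified Lean document; each statement's English description precedes it below -/
import Mathlib

section
/- Let U, V be bialgebras in duality via an invertible pairing, and let D = D(U^cop, V) be the generalized quantum double with multiplication (m ⊗ x)(n ⊗ y) = ⟨n₃, x₁⟩⟨S_U⁻¹(n₁), x₃⟩ mn₂ ⊗ x₂y. Then there exists a bialgebra projection π : D → U^cop with π ∘ i = id (where i(m) = m ⊗ 1) if and only if there exists a bialgebra morphism γ : V → U^cop satisfying γ(y)m = ρ⁻¹(m₁, y₃)ρ(m₃, y₁) m₂ γ(y₂) for all y ∈ V, m ∈ U, where ρ is the skew pairing on U^cop ⊗ V induced by ⟨,⟩. -/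
open TensorProduct Coalgebra

noncomputable section

/-- Convolution product of two `k`-valued functionals on a coalgebra. -/
def conv {k C : Type*} [CommRing k] [AddCommGroup C] [Module k C] [CoalgebraStruct k C]
    (f g : C →ₗ[k] k) : C →ₗ[k] k :=
  LinearMap.mul' k k ∘ₗ TensorProduct.map f g ∘ₗ CoalgebraStruct.comul

variable {k U V : Type*} [CommRing k] [Ring U] [Ring V] [Bialgebra k U] [Bialgebra k V]

/-- The comultiplication of the coalgebra `U^cop ⊗ V`. -/
def comulCop : U ⊗[k] V →ₗ[k] (U ⊗[k] V) ⊗[k] (U ⊗[k] V) :=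
  (TensorProduct.tensorTensorTensorComm k U U V V).toLinearMap ∘ₗ
    TensorProduct.map ((TensorProduct.comm k U U).toLinearMap ∘ₗ Coalgebra.comul)
      Coalgebra.comul

/-- Convolution of bilinear forms on `U ⊗ V` with respect to the coalgebra `U^cop ⊗ V`. -/
def convCop (f g : U ⊗[k] V →ₗ[k] k) : U ⊗[k] V →ₗ[k] k :=
  LinearMap.mul' k k ∘ₗ TensorProduct.map f g ∘ₗ comulCop

namespace Stmt6Aux

universe w w1 w2 w3 w4

section General
variable {k A B : Type*} [CommRing k] [AddCommGroup A] [Module k A] [Coalgebra k A]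
  [AddCommGroup B] [Module k B] [Coalgebra k B]

/-- Reindex a representation to live in an arbitrary universe. -/
def reprU {ι : Type*} {a : A} (r : Coalgebra.Repr k a ι) :
    Coalgebra.Repr k a (ULift.{w} (Fin r.index.card)) where
  index := Finset.univ
  left i := r.left (r.index.equivFin.symm i.down)
  right i := r.right (r.index.equivFin.symm i.down)
  eq := by
    rw [← r.eq, ← Finset.sum_coe_sort r.index (fun x => r.left x ⊗ₜ[k] r.right x)]
    exact (Fintype.sum_equiv (r.index.equivFin.trans Equiv.ulift.symm)
      (fun x : {x // x ∈ r.index} => r.left x ⊗ₜ[k] r.right x)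
      (fun i => r.left (r.index.equivFin.symm i.down) ⊗ₜ[k]
        r.right (r.index.equivFin.symm i.down))
      (fun x => by simp [Equiv.ulift])).symm

lemma reprU_sum_attach {M : Type*} [AddCommMonoid M] {ι : Type*} {a : A}
    (r : Coalgebra.Repr k a ι)
    (H : r.ι → M) :
    (∑ i ∈ (reprU.{w} r).index, H (r.index.equivFin.symm i.down)) =
      ∑ i ∈ r.index, H i := by
  calc ∑ i ∈ (reprU.{w} r).index, H (r.index.equivFin.symm i.down)
      = ∑ x : {x // x ∈ r.index}, H x :=
        Fintype.sum_equiv (Equiv.ulift.trans r.index.equivFin.symm) _ _ (fun i => rfl)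
    _ = ∑ i ∈ r.index, H i := Finset.sum_coe_sort r.index H

lemma quad_transport {M : Type*} [AddCommMonoid M] {n : A} {x : B}
    {ιn : Type*} {κn : ιn → Type*} {ιx : Type*} {κx : ιx → Type*}
    (rn : Coalgebra.Repr k n ιn) (rn' : ∀ i : rn.ι, Coalgebra.Repr k (rn.left i) (κn i))
    (rx : Coalgebra.Repr k x ιx) (rx' : ∀ a : rx.ι, Coalgebra.Repr k (rx.left a) (κx a))
    (T : A → A → A → B → B → B → M) :
    (∑ i ∈ (reprU.{w1} rn).index, ∑ a ∈ (reprU.{w3} rx).index,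
      ∑ j ∈ (reprU.{w2} (rn' (rn.index.equivFin.symm i.down))).index,
      ∑ b ∈ (reprU.{w4} (rx' (rx.index.equivFin.symm a.down))).index,
        T (rn.right (rn.index.equivFin.symm i.down))
          ((rn' (rn.index.equivFin.symm i.down)).left
            ((rn' (rn.index.equivFin.symm i.down)).index.equivFin.symm j.down))
          ((rn' (rn.index.equivFin.symm i.down)).right
            ((rn' (rn.index.equivFin.symm i.down)).index.equivFin.symm j.down))
          (rx.right (rx.index.equivFin.symm a.down))
          ((rx' (rx.index.equivFin.symm a.down)).left
            ((rx' (rx.index.equivFin.symm a.down)).index.equivFin.symm b.down))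
          ((rx' (rx.index.equivFin.symm a.down)).right
            ((rx' (rx.index.equivFin.symm a.down)).index.equivFin.symm b.down))) =
    ∑ i ∈ rn.index, ∑ a ∈ rx.index, ∑ j ∈ (rn' i).index, ∑ b ∈ (rx' a).index,
      T (rn.right i) ((rn' i).left j) ((rn' i).right j)
        (rx.right a) ((rx' a).left b) ((rx' a).right b) := by
  refine Eq.trans (reprU_sum_attach rn (fun t =>
      ∑ a ∈ (reprU.{w3} rx).index,
      ∑ j ∈ (reprU.{w2} (rn' t)).index,
      ∑ b ∈ (reprU.{w4} (rx' (rx.index.equivFin.symm a.down))).index,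
        T (rn.right t)
          ((rn' t).left ((rn' t).index.equivFin.symm j.down))
          ((rn' t).right ((rn' t).index.equivFin.symm j.down))
          (rx.right (rx.index.equivFin.symm a.down))
          ((rx' (rx.index.equivFin.symm a.down)).left
            ((rx' (rx.index.equivFin.symm a.down)).index.equivFin.symm b.down))
          ((rx' (rx.index.equivFin.symm a.down)).right
            ((rx' (rx.index.equivFin.symm a.down)).index.equivFin.symm b.down))))
    (Finset.sum_congr rfl fun t _ => ?_)
  refine Eq.trans (reprU_sum_attach rx (fun s =>
      ∑ j ∈ (reprU.{w2} (rn' t)).index,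
      ∑ b ∈ (reprU.{w4} (rx' s)).index,
        T (rn.right t)
          ((rn' t).left ((rn' t).index.equivFin.symm j.down))
          ((rn' t).right ((rn' t).index.equivFin.symm j.down))
          (rx.right s)
          ((rx' s).left ((rx' s).index.equivFin.symm b.down))
          ((rx' s).right ((rx' s).index.equivFin.symm b.down))))
    (Finset.sum_congr rfl fun s _ => ?_)
  refine Eq.trans (reprU_sum_attach (rn' t) (fun j =>
      ∑ b ∈ (reprU.{w4} (rx' s)).index,
        T (rn.right t) ((rn' t).left j) ((rn' t).right j)
          (rx.right s)
          ((rx' s).left ((rx' s).index.equivFin.symm b.down))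
          ((rx' s).right ((rx' s).index.equivFin.symm b.down))))
    (Finset.sum_congr rfl fun j _ => ?_)
  exact reprU_sum_attach (rx' s) (fun b =>
    T (rn.right t) ((rn' t).left j) ((rn' t).right j)
      (rx.right s) ((rx' s).left b) ((rx' s).right b))

lemma csr {ι : Type*} {a : A} (r : Coalgebra.Repr k a ι) :
    ∑ i ∈ r.index, Coalgebra.counit (R := k) (r.left i) • r.right i = a := by
  have h := congrArg (TensorProduct.lid k A) (Coalgebra.sum_counit_tmul_eq r)
  simp only [map_sum, TensorProduct.lid_tmul, one_smul] at h
  exact h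

lemma csl {ι : Type*} {a : A} (r : Coalgebra.Repr k a ι) :
    ∑ i ∈ r.index, Coalgebra.counit (R := k) (r.right i) • r.left i = a := by
  have h := congrArg (TensorProduct.rid k A) (Coalgebra.sum_tmul_counit_eq r)
  simp only [map_sum, TensorProduct.rid_tmul, one_smul] at h
  exact h

end General

/-- Trivial representation of `1` in a bialgebra. -/
def reprOne (k A : Type*) [CommRing k] [Ring A] [Bialgebra k A] :
    Coalgebra.Repr k (1 : A) (ULift.{w} Unit) where
  index := Finset.univ
  left _ := 1
  right _ := 1
  eq := by simp [Bialgebra.comul_one, Algebra.TensorProduct.one_def]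

variable {k U V : Type*} [CommRing k] [Ring U] [Ring V] [Bialgebra k U] [Bialgebra k V]

lemma comm_mul (A B : U ⊗[k] U) :
    (TensorProduct.comm k U U) (A * B) =
      (TensorProduct.comm k U U) A * (TensorProduct.comm k U U) B := by
  induction A using TensorProduct.induction_on with
  | zero => simp
  | tmul a b =>
    induction B using TensorProduct.induction_on with
    | zero => simp
    | tmul c d => simp [Algebra.TensorProduct.tmul_mul_tmul]
    | add x y hx hy => simp only [mul_add, map_add, hx, hy]
  | add x y hx hy => simp only [add_mul, map_add, hx, hy]

lemma comulCop_tmul {ι κ : Type*} (m : U) (x : V) (rm : Coalgebra.Repr k m ι)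
    (rx : Coalgebra.Repr k x κ) :
    comulCop (m ⊗ₜ[k] x) = ∑ i ∈ rm.index, ∑ a ∈ rx.index,
      (rm.right i ⊗ₜ[k] rx.left a) ⊗ₜ[k] (rm.left i ⊗ₜ[k] rx.right a) := by
  rw [comulCop]
  simp only [LinearMap.comp_apply, TensorProduct.map_tmul]
  rw [← rm.eq, ← rx.eq]
  simp only [map_sum, TensorProduct.comm_tmul, TensorProduct.sum_tmul,
    TensorProduct.tmul_sum, map_sum, LinearEquiv.coe_coe,
    TensorProduct.tensorTensorTensorComm_tmul]
  rw [Finset.sum_comm]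

lemma pinv_one_left (p pinv : U →ₗ[k] V →ₗ[k] k)
    (hp3 : ∀ x : V, p 1 x = Coalgebra.counit x)
    (hpinv1 : convCop (TensorProduct.lift p) (TensorProduct.lift pinv) =
      LinearMap.mul' k k ∘ₗ TensorProduct.map Coalgebra.counit Coalgebra.counit)
    (x : V) : pinv 1 x = Coalgebra.counit x := by
  have h := LinearMap.congr_fun hpinv1 ((1 : U) ⊗ₜ[k] x)
  rw [convCop] at h
  simp only [LinearMap.comp_apply, TensorProduct.map_tmul, LinearMap.mul'_apply] at h
  rw [comulCop_tmul 1 x (reprOne.{0} k U) (Coalgebra.Repr.arbitrary k x)] at h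
  simp only [reprOne, Finset.univ_unique, Finset.sum_singleton, map_sum,
    TensorProduct.map_tmul, LinearMap.mul'_apply, TensorProduct.lift.tmul, hp3,
    Bialgebra.counit_one, one_mul] at h
  calc pinv 1 x = pinv 1 (∑ i ∈ (Coalgebra.Repr.arbitrary k x).index,
        Coalgebra.counit (R := k) ((Coalgebra.Repr.arbitrary k x).left i) •
          (Coalgebra.Repr.arbitrary k x).right i) := by rw [csr]
    _ = Coalgebra.counit x := by
        rw [map_sum]
        simpa only [map_smul, smul_eq_mul] using h

lemma pinv_one_right (p pinv : U →ₗ[k] V →ₗ[k] k)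
    (hp4 : ∀ m : U, p m 1 = Coalgebra.counit m)
    (hpinv1 : convCop (TensorProduct.lift p) (TensorProduct.lift pinv) =
      LinearMap.mul' k k ∘ₗ TensorProduct.map Coalgebra.counit Coalgebra.counit)
    (m : U) : pinv m 1 = Coalgebra.counit m := by
  have h := LinearMap.congr_fun hpinv1 (m ⊗ₜ[k] (1 : V))
  rw [convCop] at h
  simp only [LinearMap.comp_apply, TensorProduct.map_tmul, LinearMap.mul'_apply] at h
  rw [comulCop_tmul m 1 (Coalgebra.Repr.arbitrary k m) (reprOne.{0} k V)] at h
  simp only [reprOne, Finset.univ_unique, Finset.sum_singleton, map_sum,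
    TensorProduct.map_tmul, LinearMap.mul'_apply, TensorProduct.lift.tmul, hp4,
    Bialgebra.counit_one, mul_one] at h
  calc pinv m 1 = pinv.flip 1 (∑ i ∈ (Coalgebra.Repr.arbitrary k m).index,
        Coalgebra.counit (R := k) ((Coalgebra.Repr.arbitrary k m).right i) •
          (Coalgebra.Repr.arbitrary k m).left i) := by rw [csl]; rfl
    _ = Coalgebra.counit m := by
        rw [map_sum]
        simp only [map_smul, LinearMap.flip_apply, smul_eq_mul]
        exact h.symm ▸ rfl

end Stmt6Aux

open Stmt6Aux
set_option maxHeartbeats 2000000 in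
set_option synthInstance.maxHeartbeats 400000 in
/-- for bialgebras `U, V` in duality via an invertible pairing, the
generalized quantum double `D(U^cop, V)` admits a bialgebra projection `π` onto `U^cop`
splitting `i(m) = m ⊗ 1` if and only if there is a bialgebra morphism `γ : V → U^cop`
satisfying `γ(y) m = ρ⁻¹(m₁, y₃) ρ(m₃, y₁) m₂ γ(y₂)`. -/
theorem statement6 {k U V : Type*} [Field k] [Ring U] [Ring V]
    [Bialgebra k U] [Bialgebra k V]
    (p pinv : U →ₗ[k] V →ₗ[k] k)
    (hp1 : ∀ (m n : U) (x : V), p (m * n) x = conv (p m) (p n) x)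
    (hp2 : ∀ (m : U) (x y : V), p m (x * y) = conv (p.flip x) (p.flip y) m)
    (hp3 : ∀ x : V, p 1 x = Coalgebra.counit x)
    (hp4 : ∀ m : U, p m 1 = Coalgebra.counit m)
    (hpinv1 : convCop (TensorProduct.lift p) (TensorProduct.lift pinv) =
      LinearMap.mul' k k ∘ₗ TensorProduct.map Coalgebra.counit Coalgebra.counit)
    (hpinv2 : convCop (TensorProduct.lift pinv) (TensorProduct.lift p) =
      LinearMap.mul' k k ∘ₗ TensorProduct.map Coalgebra.counit Coalgebra.counit)
    -- `mD` is the multiplication of the generalized quantum double `D(U^cop, V)`: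
    -- `(m ⊗ x)(n ⊗ y) = ⟨n₃, x₁⟩ ⟨S⁻¹(n₁), x₃⟩ m n₂ ⊗ x₂ y`
    (mD : U ⊗[k] V →ₗ[k] U ⊗[k] V →ₗ[k] U ⊗[k] V)
    (hmD : ∀ (m : U) (x : V) (n : U) (y : V)
      {ιn : Type*} {κn : ιn → Type*} {ιx : Type*} {κx : ιx → Type*}
      (rn : Coalgebra.Repr k n ιn) (rn' : ∀ i : rn.ι, Coalgebra.Repr k (rn.left i) (κn i))
      (rx : Coalgebra.Repr k x ιx) (rx' : ∀ a : rx.ι, Coalgebra.Repr k (rx.left a) (κx a)),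
      mD (m ⊗ₜ[k] x) (n ⊗ₜ[k] y) =
        ∑ i ∈ rn.index, ∑ a ∈ rx.index, ∑ j ∈ (rn' i).index, ∑ b ∈ (rx' a).index,
          (p (rn.right i) ((rx' a).left b) * pinv ((rn' i).left j) (rx.right a)) •
            ((m * (rn' i).right j) ⊗ₜ[k] ((rx' a).right b * y))) :
    -- there is a bialgebra projection π : D(U^cop, V) → U^cop splitting i ...
    ((∃ π : U ⊗[k] V →ₗ[k] U,
        (∀ a b : U ⊗[k] V, π (mD a b) = π a * π b) ∧
        π ((1 : U) ⊗ₜ[k] (1 : V)) = 1 ∧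
        ((TensorProduct.comm k U U).toLinearMap ∘ₗ Coalgebra.comul) ∘ₗ π =
          TensorProduct.map π π ∘ₗ comulCop ∧
        (Coalgebra.counit (R := k) (A := U)) ∘ₗ π =
          LinearMap.mul' k k ∘ₗ TensorProduct.map Coalgebra.counit Coalgebra.counit ∧
        (∀ m : U, π (m ⊗ₜ[k] (1 : V)) = m)) ↔
    -- ... iff there is a bialgebra morphism γ : V → U^cop with the stated property
      (∃ γ : V →ₗ[k] U,
        (∀ x y : V, γ (x * y) = γ x * γ y) ∧
        γ 1 = 1 ∧
        ((TensorProduct.comm k U U).toLinearMap ∘ₗ Coalgebra.comul) ∘ₗ γ =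
          TensorProduct.map γ γ ∘ₗ Coalgebra.comul ∧
        (Coalgebra.counit (R := k) (A := U)) ∘ₗ γ = Coalgebra.counit ∧
        (∀ (y : V) (m : U)
          {ιm : Type*} {κm : ιm → Type*} {ιy : Type*} {κy : ιy → Type*}
          (rm : Coalgebra.Repr k m ιm) (rm' : ∀ i : rm.ι, Coalgebra.Repr k (rm.left i) (κm i))
          (ry : Coalgebra.Repr k y ιy) (ry' : ∀ a : ry.ι, Coalgebra.Repr k (ry.left a) (κy a)),
          γ y * m =
            ∑ i ∈ rm.index, ∑ a ∈ ry.index, ∑ j ∈ (rm' i).index, ∑ b ∈ (ry' a).index,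
              (pinv ((rm' i).left j) (ry.right a) * p (rm.right i) ((ry' a).left b)) •
                ((rm' i).right j * γ ((ry' a).right b))))) := by
  have hpinvL : ∀ x : V, pinv 1 x = Coalgebra.counit x := pinv_one_left p pinv hp3 hpinv1
  constructor
  · -- forward direction
    rintro ⟨π, hmul, hone, hcomul, hcounit, hsplit⟩
    have hA : ∀ (u : U) (v : V), mD (u ⊗ₜ[k] (1 : V)) ((1 : U) ⊗ₜ[k] v) = u ⊗ₜ[k] v := by
      intro u v
      rw [hmD u 1 1 v (reprU (reprOne.{0} k U)) (fun i => reprU (reprOne.{0} k U))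
        (reprU (reprOne.{0} k V)) (fun a => reprU (reprOne.{0} k V))]
      refine Eq.trans (quad_transport (reprOne.{0} k U) (fun _ => reprOne.{0} k U)
        (reprOne.{0} k V) (fun _ => reprOne.{0} k V)
        (fun a b c d e f => (p a e * pinv b d) • ((u * c) ⊗ₜ[k] (f * v)))) ?_
      simp [reprOne, hp3, hpinvL]
    have hC : ∀ (u : U) (v : V), π (u ⊗ₜ[k] v) = u * π ((1 : U) ⊗ₜ[k] v) := by
      intro u v
      rw [← hA u v, hmul, hsplit]
    have hB : ∀ x y : V, mD ((1 : U) ⊗ₜ[k] x) ((1 : U) ⊗ₜ[k] y) =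
        (1 : U) ⊗ₜ[k] (x * y) := by
      intro x y
      rw [hmD 1 x 1 y (reprU (reprOne.{0} k U)) (fun i => reprU (reprOne.{0} k U))
        (reprU (Coalgebra.Repr.arbitrary k x))
        (fun a => reprU (Coalgebra.Repr.arbitrary k
          ((Coalgebra.Repr.arbitrary k x).left
            ((Coalgebra.Repr.arbitrary k x).index.equivFin.symm a.down))))]
      refine Eq.trans (quad_transport (reprOne.{0} k U) (fun _ => reprOne.{0} k U)
        (Coalgebra.Repr.arbitrary k x)
        (fun t => Coalgebra.Repr.arbitrary k ((Coalgebra.Repr.arbitrary k x).left t))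
        (fun a b c d e f => (p a e * pinv b d) • (((1 : U) * c) ⊗ₜ[k] (f * y)))) ?_
      simp only [reprOne, Finset.univ_unique, Finset.sum_singleton, hp3, hpinvL, one_mul]
      set rx := Coalgebra.Repr.arbitrary k x with hrx
      have step1 : ∀ t : rx.ι, ∑ b ∈ (Coalgebra.Repr.arbitrary k (rx.left t)).index,
          (Coalgebra.counit (R := k) ((Coalgebra.Repr.arbitrary k (rx.left t)).left b) *
            Coalgebra.counit (rx.right t)) •
            ((1 : U) ⊗ₜ[k] ((Coalgebra.Repr.arbitrary k (rx.left t)).right b * y)) =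
          Coalgebra.counit (R := k) (rx.right t) • ((1 : U) ⊗ₜ[k] (rx.left t * y)) := by
        intro t
        have hft := congrArg (fun v : V => Coalgebra.counit (R := k) (rx.right t) •
            ((1 : U) ⊗ₜ[k] (v * y))) (csr (Coalgebra.Repr.arbitrary k (rx.left t)))
        rw [← hft]
        simp only [Finset.sum_mul, smul_mul_assoc, TensorProduct.tmul_sum,
          TensorProduct.tmul_smul, Finset.smul_sum, smul_smul]
        exact Finset.sum_congr rfl fun b _ => by rw [mul_comm]
      rw [Finset.sum_congr rfl (fun t _ => step1 t)]
      have hfx := congrArg (fun v : V => (1 : U) ⊗ₜ[k] (v * y)) (csl rx)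
      rw [← hfx]
      simp only [Finset.sum_mul, smul_mul_assoc, TensorProduct.tmul_sum,
        TensorProduct.tmul_smul]
    refine ⟨π ∘ₗ TensorProduct.mk k U V 1, ?_, ?_, ?_, ?_, ?_⟩
    · -- multiplicativity of γ
      intro x y
      show π ((1 : U) ⊗ₜ[k] (x * y)) = π ((1 : U) ⊗ₜ[k] x) * π ((1 : U) ⊗ₜ[k] y)
      rw [← hB x y, hmul]
    · -- γ 1 = 1
      exact hone
    · -- comultiplicativity of γ
      apply LinearMap.ext
      intro y
      have h1 := LinearMap.congr_fun hcomul ((1 : U) ⊗ₜ[k] y)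
      have h2 : comulCop ((1 : U) ⊗ₜ[k] y) =
          TensorProduct.map (TensorProduct.mk k U V 1) (TensorProduct.mk k U V 1)
            (Coalgebra.comul y) := by
        rw [comulCop_tmul 1 y (reprOne.{0} k U) (Coalgebra.Repr.arbitrary k y),
          ← (Coalgebra.Repr.arbitrary k y).eq, map_sum]
        simp [reprOne, Finset.univ_unique]
      simp only [LinearMap.comp_apply, TensorProduct.mk_apply] at h1 h2 ⊢
      rw [h1, h2, ← LinearMap.comp_apply (TensorProduct.map π π), ← TensorProduct.map_comp]
    · -- counit of γ
      apply LinearMap.ext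
      intro y
      have h1 := LinearMap.congr_fun hcounit ((1 : U) ⊗ₜ[k] y)
      simpa using h1
    · -- the commutation relation
      intro y m ιm κm ιy κy rm rm' ry ry'
      have e1 := (hmD 1 y m 1 (reprU rm)
        (fun i => reprU (rm' (rm.index.equivFin.symm i.down)))
        (reprU ry) (fun a => reprU (ry' (ry.index.equivFin.symm a.down)))).trans
        (quad_transport rm rm' ry ry'
          (fun a b c d e f => (p a e * pinv b d) • (((1 : U) * c) ⊗ₜ[k] (f * (1 : V)))))
      calc (π ∘ₗ TensorProduct.mk k U V 1) y * m
          = π ((1 : U) ⊗ₜ[k] y) * π (m ⊗ₜ[k] (1 : V)) := by rw [hsplit]; rfl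
        _ = π (mD ((1 : U) ⊗ₜ[k] y) (m ⊗ₜ[k] (1 : V))) := (hmul _ _).symm
        _ = _ := by
            rw [e1]
            simp only [map_sum, map_smul, one_mul, mul_one]
            refine Finset.sum_congr rfl fun i _ => Finset.sum_congr rfl fun a _ =>
              Finset.sum_congr rfl fun j _ => Finset.sum_congr rfl fun b _ => ?_
            rw [hC, mul_comm (p _ _) (pinv _ _)]
            rfl
  · -- backward direction
    rintro ⟨γ, hγmul, hγ1, hγcomul, hγcounit, hγ5⟩
    set π : U ⊗[k] V →ₗ[k] U :=
      LinearMap.mul' k U ∘ₗ TensorProduct.map LinearMap.id γ with hπ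
    have hπt : ∀ (u : U) (v : V), π (u ⊗ₜ[k] v) = u * γ v := by
      intro u v
      simp [hπ, LinearMap.mul'_apply]
    have hγc : ∀ x : V, Coalgebra.counit (R := k) (γ x) = Coalgebra.counit x :=
      fun x => LinearMap.congr_fun hγcounit x
    refine ⟨π, ?_, ?_, ?_, ?_, ?_⟩
    · -- multiplicativity
      intro a b
      induction a using TensorProduct.induction_on with
      | zero => simp
      | add a₁ a₂ h1 h2 => simp only [map_add, LinearMap.add_apply, h1, h2, add_mul]
      | tmul m x =>
        induction b using TensorProduct.induction_on with
        | zero => simp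
        | add b₁ b₂ h1 h2 => simp only [map_add, h1, h2, mul_add]
        | tmul n y =>
          have e1 := (hmD m x n y (reprU (Coalgebra.Repr.arbitrary k n))
            (fun i => reprU (Coalgebra.Repr.arbitrary k
              ((Coalgebra.Repr.arbitrary k n).left
                ((Coalgebra.Repr.arbitrary k n).index.equivFin.symm i.down))))
            (reprU (Coalgebra.Repr.arbitrary k x))
            (fun a => reprU (Coalgebra.Repr.arbitrary k
              ((Coalgebra.Repr.arbitrary k x).left
                ((Coalgebra.Repr.arbitrary k x).index.equivFin.symm a.down))))).trans
            (quad_transport (Coalgebra.Repr.arbitrary k n)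
              (fun t => Coalgebra.Repr.arbitrary k ((Coalgebra.Repr.arbitrary k n).left t))
              (Coalgebra.Repr.arbitrary k x)
              (fun t => Coalgebra.Repr.arbitrary k ((Coalgebra.Repr.arbitrary k x).left t))
              (fun a b c d e f => (p a e * pinv b d) • ((m * c) ⊗ₜ[k] (f * y))))
          have h5 := (hγ5 x n (reprU (Coalgebra.Repr.arbitrary k n))
            (fun i => reprU (Coalgebra.Repr.arbitrary k
              ((Coalgebra.Repr.arbitrary k n).left
                ((Coalgebra.Repr.arbitrary k n).index.equivFin.symm i.down))))
            (reprU (Coalgebra.Repr.arbitrary k x))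
            (fun a => reprU (Coalgebra.Repr.arbitrary k
              ((Coalgebra.Repr.arbitrary k x).left
                ((Coalgebra.Repr.arbitrary k x).index.equivFin.symm a.down))))).trans
            (quad_transport (Coalgebra.Repr.arbitrary k n)
              (fun t => Coalgebra.Repr.arbitrary k ((Coalgebra.Repr.arbitrary k n).left t))
              (Coalgebra.Repr.arbitrary k x)
              (fun t => Coalgebra.Repr.arbitrary k ((Coalgebra.Repr.arbitrary k x).left t))
              (fun a b c d e f => (pinv b d * p a e) • (c * γ f)))
          rw [e1]
          simp only [map_sum, map_smul, hπt, hγmul]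
          rw [mul_assoc m (γ x) _, ← mul_assoc (γ x) n (γ y), h5]
          simp only [Finset.sum_mul, Finset.mul_sum, smul_mul_assoc, mul_smul_comm]
          refine Finset.sum_congr rfl fun i _ => Finset.sum_congr rfl fun a _ =>
            Finset.sum_congr rfl fun j _ => Finset.sum_congr rfl fun b _ => ?_
          rw [mul_comm (pinv _ _) (p _ _)]
          congr 1
          rw [mul_assoc, mul_assoc]
    · -- unit
      rw [hπt, hγ1, mul_one]
    · -- comultiplicativity
      apply TensorProduct.ext'
      intro m x
      have key : ∀ (A : U ⊗[k] U) (B : V ⊗[k] V),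
          (TensorProduct.map π π) ((TensorProduct.tensorTensorTensorComm k U U V V)
            (A ⊗ₜ[k] B)) = A * (TensorProduct.map γ γ) B := by
        intro A B
        induction A using TensorProduct.induction_on with
        | zero => simp [TensorProduct.zero_tmul]
        | add A₁ A₂ h1 h2 => simp only [TensorProduct.add_tmul, map_add, h1, h2, add_mul]
        | tmul a b =>
          induction B using TensorProduct.induction_on with
          | zero => simp [TensorProduct.tmul_zero]
          | add B₁ B₂ h1 h2 => simp only [TensorProduct.tmul_add, map_add, h1, h2, mul_add]
          | tmul u v =>
            simp [TensorProduct.tensorTensorTensorComm_tmul, hπt,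
              Algebra.TensorProduct.tmul_mul_tmul]
      have hγcm : (TensorProduct.comm k U U) (Coalgebra.comul (R := k) (γ x)) =
          (TensorProduct.map γ γ) (Coalgebra.comul x) :=
        LinearMap.congr_fun hγcomul x
      simp only [LinearMap.comp_apply, LinearEquiv.coe_coe, hπt, comulCop,
        TensorProduct.map_tmul]
      rw [Bialgebra.comul_mul, comm_mul, hγcm, key]
    · -- counit
      apply TensorProduct.ext'
      intro m x
      simp only [LinearMap.comp_apply, hπt, TensorProduct.map_tmul,
        LinearMap.mul'_apply, Bialgebra.counit_mul, hγc]
    · -- splitting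
      intro m
      rw [hπt, hγ1, mul_one]
end
end

section
/- In M_q(N), the bialgebra with generators x_{ij} (1 ≤ i,j ≤ N) and relations x_{im}x_{in} = q x_{in}x_{im} (n < m), x_{jm}x_{im} = q x_{im}x_{jm} (i < j), x_{jn}x_{im} = x_{im}x_{jn} (i < j, n < m), x_{jm}x_{in} − x_{in}x_{jm} = (q − q⁻¹)x_{im}x_{jn} (i < j, n < m), with comatrix coalgebra structure Δ(x_{ij}) = Σ_k x_{ik} ⊗ x_{kj} and ε(x_{ij}) = δ_{ij}: the bilinear form σ defined on generators by σ(x_{ii}, x_{ii}) = zq, σ(x_{ii}, x_{jj}) = z for i ≠ j, σ(x_{ij}, x_{ji}) = z(q − q⁻¹) for i < j, and 0 otherwise (where z^N = q⁻¹), extended as a skew pairing, satisfies σ(det_q, x) = σ(x, det_q) = ε(x) for all x ∈ M_q(N), where det_q = Σ_{p ∈ S_N} (−q)^{−l(p)} x_{1p(1)}⋯x_{Np(N)}. -/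
open TensorProduct Coalgebra

noncomputable section

/-- The number of inversions `l(p)` of a permutation of `Fin N`. -/
def inversions {N : ℕ} (p : Equiv.Perm (Fin N)) : ℕ :=
  (Finset.univ.filter fun ij : Fin N × Fin N => ij.1 < ij.2 ∧ p ij.2 < p ij.1).card

/-- The quantum determinant `det_q = Σ_p (−q)^{−l(p)} x_{1 p(1)} ⋯ x_{N p(N)}`. -/
def detq {k H : Type*} [Field k] [Ring H] [Algebra k H]
    (q : k) (N : ℕ) (x : Fin N → Fin N → H) : H :=
  ∑ p : Equiv.Perm (Fin N),
    (((-q) ^ inversions p)⁻¹ : k) • ((List.finRange N).map fun i => x i (p i)).prod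

lemma inversions_one (N : ℕ) : inversions (1 : Equiv.Perm (Fin N)) = 0 := by
  rw [inversions, Finset.card_eq_zero, Finset.filter_eq_empty_iff]
  rintro ⟨i, j⟩ -
  simp only [Equiv.Perm.one_apply, not_and]
  exact fun h => (lt_asymm h)

lemma perm_eq_one_of_ge {N : ℕ} (p : Equiv.Perm (Fin N)) (h : ∀ i, i ≤ p i) : p = 1 := by
  have hsum : ∑ i : Fin N, ((i : ℕ)) = ∑ i : Fin N, ((p i : ℕ)) :=
    (Equiv.sum_comp p (fun i : Fin N => (i : ℕ))).symm
  have := (Finset.sum_eq_sum_iff_of_le (fun i _ => Fin.le_def.mp (h i))).1 hsum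
  ext i
  exact (this i (Finset.mem_univ i)).symm

lemma perm_eq_one_of_le {N : ℕ} (p : Equiv.Perm (Fin N)) (h : ∀ i, p i ≤ i) : p = 1 := by
  have hsum : ∑ i : Fin N, ((p i : ℕ)) = ∑ i : Fin N, ((i : ℕ)) :=
    Equiv.sum_comp p (fun i : Fin N => (i : ℕ))
  have := (Finset.sum_eq_sum_iff_of_le (fun i _ => Fin.le_def.mp (h i))).1 hsum
  ext i
  exact (this i (Finset.mem_univ i))

lemma perm_eq_one_of_no_descent {N : ℕ} (p : Equiv.Perm (Fin N))
    (h : ∀ a (ha : a + 1 < N), p ⟨a, Nat.lt_of_succ_lt ha⟩ < p ⟨a + 1, ha⟩) : p = 1 := by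
  apply perm_eq_one_of_ge
  have key : ∀ a (ha : a < N), a ≤ (p ⟨a, ha⟩ : ℕ) := by
    intro a
    induction a with
    | zero => exact fun _ => Nat.zero_le _
    | succ b ih =>
      intro ha
      have hb : b < N := Nat.lt_of_succ_lt ha
      have h1 := h b ha
      have h2 := ih hb
      rw [Fin.lt_def] at h1
      omega
  intro i
  have := key i.1 i.2
  rw [Fin.le_def]
  simpa using this

lemma swap_val {N : ℕ} (a : ℕ) (ha : a + 1 < N) (u : Fin N) :
    ((Equiv.swap (⟨a, Nat.lt_of_succ_lt ha⟩ : Fin N) ⟨a + 1, ha⟩ u : Fin N) : ℕ) =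
      if (u : ℕ) = a then a + 1 else if (u : ℕ) = a + 1 then a else u := by
  rcases eq_or_ne u ⟨a, Nat.lt_of_succ_lt ha⟩ with rfl | h1
  · rw [Equiv.swap_apply_left]; simp
  · rcases eq_or_ne u ⟨a + 1, ha⟩ with rfl | h2
    · rw [Equiv.swap_apply_right]
      simp
    · rw [Equiv.swap_apply_of_ne_of_ne h1 h2]
      have h1' : ¬((u : ℕ) = a) := fun e => h1 (Fin.ext e)
      have h2' : ¬((u : ℕ) = a + 1) := fun e => h2 (Fin.ext e)
      rw [if_neg h1', if_neg h2']

lemma inversions_mul_swap {N : ℕ} (a : ℕ) (ha : a + 1 < N) (p : Equiv.Perm (Fin N))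
    (hp : p ⟨a, Nat.lt_of_succ_lt ha⟩ < p ⟨a + 1, ha⟩) :
    inversions (p * Equiv.swap ⟨a, Nat.lt_of_succ_lt ha⟩ ⟨a + 1, ha⟩) = inversions p + 1 := by
  set i : Fin N := ⟨a, Nat.lt_of_succ_lt ha⟩ with hi
  set i' : Fin N := ⟨a + 1, ha⟩ with hi'
  set s := Equiv.swap i i' with hs
  have hii' : i < i' := by rw [Fin.lt_def]; exact Nat.lt_succ_self a
  have hcard : ∀ r : Equiv.Perm (Fin N), inversions r =
      ∑ w : Fin N × Fin N, if w.1 < w.2 ∧ r w.2 < r w.1 then (1:ℕ) else 0 := by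
    intro r; rw [inversions, Finset.card_filter]
  rw [hcard, hcard]
  have hre : (∑ w : Fin N × Fin N, if w.1 < w.2 ∧ (p * s) w.2 < (p * s) w.1 then (1:ℕ) else 0) =
      ∑ w : Fin N × Fin N, (if s w.1 < s w.2 ∧ p w.2 < p w.1 then (1:ℕ) else 0) := by
    refine (Fintype.sum_equiv (Equiv.prodCongr s s)
      (fun w => if s w.1 < s w.2 ∧ p w.2 < p w.1 then (1:ℕ) else 0)
      (fun w => if w.1 < w.2 ∧ (p * s) w.2 < (p * s) w.1 then (1:ℕ) else 0) ?_).symm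
    intro w
    simp only [Equiv.prodCongr_apply, Prod.map, Equiv.Perm.mul_apply, hs,
      Equiv.swap_apply_self]
  rw [hre]
  have key : ∀ w : Fin N × Fin N, w ≠ (i', i) →
      ((if s w.1 < s w.2 ∧ p w.2 < p w.1 then (1:ℕ) else 0) =
       (if w.1 < w.2 ∧ p w.2 < p w.1 then (1:ℕ) else 0)) := by
    rintro ⟨u, v⟩ hw
    rcases eq_or_ne (u, v) (i, i') with heq | hne
    · rw [Prod.mk.injEq] at heq
      obtain ⟨rfl, rfl⟩ := heq
      rw [if_neg, if_neg]
      · rintro ⟨-, h⟩; exact lt_asymm hp h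
      · rintro ⟨-, h⟩; exact lt_asymm hp h
    · have hvals : s u < s v ↔ u < v := by
        rw [Fin.lt_def, Fin.lt_def, hs, swap_val a ha u, swap_val a ha v]
        have h1 : ¬((u:ℕ) = a ∧ (v:ℕ) = a + 1) := by
          rintro ⟨e1, e2⟩
          exact hne (by rw [Prod.mk.injEq, Fin.ext_iff, Fin.ext_iff]; exact ⟨e1, e2⟩)
        have h2 : ¬((u:ℕ) = a + 1 ∧ (v:ℕ) = a) := by
          rintro ⟨e1, e2⟩
          exact hw (by rw [Prod.mk.injEq, Fin.ext_iff, Fin.ext_iff]; exact ⟨e1, e2⟩)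
        split_ifs <;> omega
      simp only [hvals]
  rw [Finset.sum_eq_sum_sdiff_singleton_add (Finset.mem_univ ((i', i) : Fin N × Fin N)),
    Finset.sum_eq_sum_sdiff_singleton_add (Finset.mem_univ ((i', i) : Fin N × Fin N))
      (fun w : Fin N × Fin N => if w.1 < w.2 ∧ p w.2 < p w.1 then (1:ℕ) else 0)]
  have h1 : (if s i' < s i ∧ p i < p i' then (1:ℕ) else 0) = 1 := by
    rw [if_pos]
    refine ⟨?_, hp⟩
    rw [hs, Equiv.swap_apply_left, Equiv.swap_apply_right]
    exact hii'
  have h2 : (if i' < i ∧ p i < p i' then (1:ℕ) else 0) = 0 := by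
    rw [if_neg]; rintro ⟨h, -⟩; exact lt_asymm hii' h
  rw [h1, h2]
  have h3 : ∀ w ∈ Finset.univ \ {((i', i) : Fin N × Fin N)},
      (if s w.1 < s w.2 ∧ p w.2 < p w.1 then (1:ℕ) else 0) =
      (if w.1 < w.2 ∧ p w.2 < p w.1 then (1:ℕ) else 0) := by
    intro w hw
    rw [Finset.mem_sdiff, Finset.mem_singleton] at hw
    exact key w hw.2
  rw [Finset.sum_congr rfl h3]

lemma ofFn_prod_split {M : Type*} [Monoid M] {n a : ℕ} (ha : a + 1 < n) (F : Fin n → M) :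
    (List.ofFn F).prod =
      ((List.ofFn F).take a).prod *
        (F ⟨a, Nat.lt_of_succ_lt ha⟩ * (F ⟨a + 1, ha⟩ * ((List.ofFn F).drop (a + 2)).prod)) := by
  conv_lhs => rw [← List.take_append_drop a (List.ofFn F)]
  rw [List.prod_append]
  congr 1
  have hlen : (List.ofFn F).length = n := List.length_ofFn
  have h1 : a < (List.ofFn F).length := by omega
  rw [List.drop_eq_getElem_cons h1]
  have h2 : a + 1 < (List.ofFn F).length := by omega
  rw [List.drop_eq_getElem_cons h2, List.prod_cons, List.prod_cons]
  rw [List.getElem_ofFn, List.getElem_ofFn]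

lemma take_ofFn_congr {α : Type*} {n : ℕ} (a : ℕ) (F G : Fin n → α)
    (h : ∀ j : Fin n, (j : ℕ) < a → F j = G j) :
    (List.ofFn F).take a = (List.ofFn G).take a := by
  apply List.ext_getElem
  · simp
  · intro i h1 h2
    simp only [List.getElem_take, List.getElem_ofFn]
    apply h
    simp only [List.length_take, List.length_ofFn, lt_min_iff] at h1
    simpa using h1.1

lemma drop_ofFn_congr {α : Type*} {n : ℕ} (a : ℕ) (F G : Fin n → α)
    (h : ∀ j : Fin n, a ≤ (j : ℕ) → F j = G j) :
    (List.ofFn F).drop a = (List.ofFn G).drop a := by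
  apply List.ext_getElem
  · simp
  · intro i h1 h2
    simp only [List.getElem_drop, List.getElem_ofFn]
    apply h
    simp

def qmono {H : Type*} [Monoid H] {N : ℕ} (x : Fin N → Fin N → H)
    (f g : Fin N → Fin N) : H :=
  (List.ofFn fun j => x (f j) (g j)).prod

def Drow {k H : Type*} [Field k] [Ring H] [Module k H] (q : k) {N : ℕ}
    (x : Fin N → Fin N → H) (f : Fin N → Fin N) : H :=
  ∑ p : Equiv.Perm (Fin N), (((-q) ^ inversions p)⁻¹ : k) • qmono x f p

lemma perm_pair_sum {M : Type*} [AddCommMonoid M] {N : ℕ} (a : ℕ) (ha : a + 1 < N)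
    (g : Equiv.Perm (Fin N) → M) :
    ∑ p : Equiv.Perm (Fin N), g p =
      ∑ p ∈ Finset.univ.filter
          (fun p : Equiv.Perm (Fin N) => p ⟨a, Nat.lt_of_succ_lt ha⟩ < p ⟨a + 1, ha⟩),
        (g p + g (p * Equiv.swap ⟨a, Nat.lt_of_succ_lt ha⟩ ⟨a + 1, ha⟩)) := by
  set i : Fin N := ⟨a, Nat.lt_of_succ_lt ha⟩ with hi
  set i' : Fin N := ⟨a + 1, ha⟩ with hi'
  set s := Equiv.swap i i' with hs
  have hii' : i ≠ i' := Fin.ne_of_val_ne (Nat.ne_of_lt (Nat.lt_succ_self a))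
  rw [← Finset.sum_filter_add_sum_filter_not Finset.univ
    (fun p : Equiv.Perm (Fin N) => p i < p i') g, Finset.sum_add_distrib]
  congr 1
  refine Finset.sum_bij' (fun p _ => p * s) (fun p _ => p * s) ?_ ?_ ?_ ?_ ?_
  · intro p hp
    rw [Finset.mem_filter] at hp ⊢
    refine ⟨Finset.mem_univ _, ?_⟩
    have h1 : (p * s) i = p i' := by
      rw [Equiv.Perm.mul_apply, hs, Equiv.swap_apply_left]
    have h2 : (p * s) i' = p i := by
      rw [Equiv.Perm.mul_apply, hs, Equiv.swap_apply_right]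
    rw [h1, h2]
    rcases lt_or_eq_of_le (not_lt.mp hp.2) with h | h
    · exact h
    · exact absurd (p.injective h) (Ne.symm hii')
  · intro p hp
    rw [Finset.mem_filter] at hp ⊢
    refine ⟨Finset.mem_univ _, ?_⟩
    have h1 : (p * s) i = p i' := by
      rw [Equiv.Perm.mul_apply, hs, Equiv.swap_apply_left]
    have h2 : (p * s) i' = p i := by
      rw [Equiv.Perm.mul_apply, hs, Equiv.swap_apply_right]
    rw [h1, h2, not_lt]
    exact le_of_lt hp.2
  · intro p _
    show p * s * s = p
    rw [mul_assoc, hs, Equiv.swap_mul_self, mul_one]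
  · intro p _
    show p * s * s = p
    rw [mul_assoc, hs, Equiv.swap_mul_self, mul_one]
  · intro p _
    show g p = g (p * s * s)
    rw [mul_assoc, hs, Equiv.swap_mul_self, mul_one]

lemma combine_aux {k H : Type*} [Field k] [Ring H] [Algebra k H]
    (A B u1 v1 u2 v2 : H) (c c' : k) :
    c • (A * (u1 * (v1 * B))) + c' • (A * (u2 * (v2 * B))) =
      A * ((c • (u1 * v1) + c' • (u2 * v2)) * B) := by
  simp only [mul_add, add_mul, smul_mul_assoc, mul_smul_comm, mul_assoc]

lemma smul_sandwich {k H : Type*} [Field k] [Ring H] [Algebra k H]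
    (c : k) (A S B : H) : c • (A * (S * B)) = A * ((c • S) * B) := by
  rw [smul_mul_assoc, mul_smul_comm]

section swaps

variable {k H : Type*} [Field k] [Ring H] [Algebra k H] {N : ℕ}
  (q : k) (x : Fin N → Fin N → H)

lemma Drow_adj_zero (hq : q ≠ 0)
    (hrel1 : ∀ (i m n : Fin N), n < m → x i m * x i n = q • (x i n * x i m))
    (a : ℕ) (ha : a + 1 < N) (f : Fin N → Fin N)
    (hf : f ⟨a, Nat.lt_of_succ_lt ha⟩ = f ⟨a + 1, ha⟩) :
    Drow q x f = 0 := by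
  set i : Fin N := ⟨a, Nat.lt_of_succ_lt ha⟩ with hi
  set i' : Fin N := ⟨a + 1, ha⟩ with hi'
  set s := Equiv.swap i i' with hs
  have hsl : s i = i' := Equiv.swap_apply_left i i'
  have hsr : s i' = i := Equiv.swap_apply_right i i'
  rw [Drow, perm_pair_sum a ha]
  apply Finset.sum_eq_zero
  intro p hp
  have hpi : p i < p i' := (Finset.mem_filter.mp hp).2
  have hcoef : ((-q) ^ inversions (p * s))⁻¹ = (-q)⁻¹ * ((-q) ^ inversions p)⁻¹ := by
    rw [hs, inversions_mul_swap a ha p hpi, pow_succ, mul_inv_rev]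
  have hsj : ∀ j : Fin N, (j : ℕ) ≠ a → (j : ℕ) ≠ a + 1 → s j = j := fun j h1 h2 =>
    Equiv.swap_apply_of_ne_of_ne (Fin.ne_of_val_ne h1) (Fin.ne_of_val_ne h2)
  have e1 : qmono x f ⇑p = ((List.ofFn fun j => x (f j) (p j)).take a).prod *
      (x (f i) (p i) * (x (f i') (p i') *
        ((List.ofFn fun j => x (f j) (p j)).drop (a + 2)).prod)) :=
    ofFn_prod_split ha _
  have e2 : qmono x f ⇑(p * s) = ((List.ofFn fun j => x (f j) (p j)).take a).prod *
      (x (f i) (p i') * (x (f i') (p i) *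
        ((List.ofFn fun j => x (f j) (p j)).drop (a + 2)).prod)) := by
    rw [qmono]
    simp only [Equiv.Perm.mul_apply]
    rw [ofFn_prod_split ha (fun j => x (f j) (p (s j)))]
    have t1 : (List.ofFn fun j => x (f j) (p (s j))).take a =
        (List.ofFn fun j => x (f j) (p j)).take a := by
      apply take_ofFn_congr
      intro j hj
      rw [hsj j (by omega) (by omega)]
    have t2 : (List.ofFn fun j => x (f j) (p (s j))).drop (a + 2) =
        (List.ofFn fun j => x (f j) (p j)).drop (a + 2) := by
      apply drop_ofFn_congr
      intro j hj
      rw [hsj j (by omega) (by omega)]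
    rw [t1, t2]
    show _ * (x (f i) (p (s i)) * (x (f i') (p (s i')) * _)) = _
    rw [hsl, hsr]
  rw [e1, e2, hcoef, combine_aux]
  have hx : x (f i) (p i') * x (f i') (p i) = q • (x (f i) (p i) * x (f i') (p i')) := by
    rw [← hf]
    exact hrel1 (f i) (p i') (p i) hpi
  rw [hx, smul_smul, ← add_smul]
  have hc0 : ((-q) ^ inversions p)⁻¹ + (-q)⁻¹ * ((-q) ^ inversions p)⁻¹ * q = 0 := by
    have hq' : (-q) ≠ 0 := neg_ne_zero.mpr hq
    have hl : (-q) ^ inversions p ≠ 0 := pow_ne_zero _ hq'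
    field_simp
    try ring
  rw [hc0, zero_smul, zero_mul, mul_zero]

lemma Drow_adj_descend (hq : q ≠ 0)
    (hrel3 : ∀ (i j m n : Fin N), i < j → n < m → x j n * x i m = x i m * x j n)
    (hrel4 : ∀ (i j m n : Fin N), i < j → n < m →
      x j m * x i n - x i n * x j m = (q - q⁻¹) • (x i m * x j n))
    (a : ℕ) (ha : a + 1 < N) (f : Fin N → Fin N)
    (hf : f ⟨a + 1, ha⟩ < f ⟨a, Nat.lt_of_succ_lt ha⟩) :
    Drow q x f = (-q)⁻¹ •
      Drow q x (f ∘ Equiv.swap ⟨a, Nat.lt_of_succ_lt ha⟩ ⟨a + 1, ha⟩) := by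
  set i : Fin N := ⟨a, Nat.lt_of_succ_lt ha⟩ with hi
  set i' : Fin N := ⟨a + 1, ha⟩ with hi'
  set s := Equiv.swap i i' with hs
  have hsl : s i = i' := Equiv.swap_apply_left i i'
  have hsr : s i' = i := Equiv.swap_apply_right i i'
  rw [Drow, Drow, perm_pair_sum a ha, perm_pair_sum a ha, Finset.smul_sum]
  apply Finset.sum_congr rfl
  intro p hp
  have hpi : p i < p i' := (Finset.mem_filter.mp hp).2
  have hcoef : ((-q) ^ inversions (p * s))⁻¹ = (-q)⁻¹ * ((-q) ^ inversions p)⁻¹ := by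
    rw [hs, inversions_mul_swap a ha p hpi, pow_succ, mul_inv_rev]
  have hsj : ∀ j : Fin N, (j : ℕ) ≠ a → (j : ℕ) ≠ a + 1 → s j = j := fun j h1 h2 =>
    Equiv.swap_apply_of_ne_of_ne (Fin.ne_of_val_ne h1) (Fin.ne_of_val_ne h2)
  have e1 : qmono x f ⇑p = ((List.ofFn fun j => x (f j) (p j)).take a).prod *
      (x (f i) (p i) * (x (f i') (p i') *
        ((List.ofFn fun j => x (f j) (p j)).drop (a + 2)).prod)) :=
    ofFn_prod_split ha _
  have e2 : qmono x f ⇑(p * s) = ((List.ofFn fun j => x (f j) (p j)).take a).prod *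
      (x (f i) (p i') * (x (f i') (p i) *
        ((List.ofFn fun j => x (f j) (p j)).drop (a + 2)).prod)) := by
    rw [qmono]
    simp only [Equiv.Perm.mul_apply]
    rw [ofFn_prod_split ha (fun j => x (f j) (p (s j)))]
    have t1 : (List.ofFn fun j => x (f j) (p (s j))).take a =
        (List.ofFn fun j => x (f j) (p j)).take a := by
      apply take_ofFn_congr
      intro j hj
      rw [hsj j (by omega) (by omega)]
    have t2 : (List.ofFn fun j => x (f j) (p (s j))).drop (a + 2) =
        (List.ofFn fun j => x (f j) (p j)).drop (a + 2) := by
      apply drop_ofFn_congr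
      intro j hj
      rw [hsj j (by omega) (by omega)]
    rw [t1, t2]
    show _ * (x (f i) (p (s i)) * (x (f i') (p (s i')) * _)) = _
    rw [hsl, hsr]
  have e3 : qmono x (f ∘ s) ⇑p = ((List.ofFn fun j => x (f j) (p j)).take a).prod *
      (x (f i') (p i) * (x (f i) (p i') *
        ((List.ofFn fun j => x (f j) (p j)).drop (a + 2)).prod)) := by
    rw [qmono]
    simp only [Function.comp_apply]
    rw [ofFn_prod_split ha (fun j => x (f (s j)) (p j))]
    have t1 : (List.ofFn fun j => x (f (s j)) (p j)).take a =
        (List.ofFn fun j => x (f j) (p j)).take a := by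
      apply take_ofFn_congr
      intro j hj
      rw [hsj j (by omega) (by omega)]
    have t2 : (List.ofFn fun j => x (f (s j)) (p j)).drop (a + 2) =
        (List.ofFn fun j => x (f j) (p j)).drop (a + 2) := by
      apply drop_ofFn_congr
      intro j hj
      rw [hsj j (by omega) (by omega)]
    rw [t1, t2]
    show _ * (x (f (s i)) (p i) * (x (f (s i')) (p i') * _)) = _
    rw [hsl, hsr]
  have e4 : qmono x (f ∘ s) ⇑(p * s) = ((List.ofFn fun j => x (f j) (p j)).take a).prod *
      (x (f i') (p i') * (x (f i) (p i) *
        ((List.ofFn fun j => x (f j) (p j)).drop (a + 2)).prod)) := by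
    rw [qmono]
    simp only [Function.comp_apply, Equiv.Perm.mul_apply]
    rw [ofFn_prod_split ha (fun j => x (f (s j)) (p (s j)))]
    have t1 : (List.ofFn fun j => x (f (s j)) (p (s j))).take a =
        (List.ofFn fun j => x (f j) (p j)).take a := by
      apply take_ofFn_congr
      intro j hj
      rw [hsj j (by omega) (by omega)]
    have t2 : (List.ofFn fun j => x (f (s j)) (p (s j))).drop (a + 2) =
        (List.ofFn fun j => x (f j) (p j)).drop (a + 2) := by
      apply drop_ofFn_congr
      intro j hj
      rw [hsj j (by omega) (by omega)]
    rw [t1, t2]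
    show _ * (x (f (s i)) (p (s i)) * (x (f (s i')) (p (s i')) * _)) = _
    rw [hsl, hsr]
  rw [e1, e2, e3, e4, hcoef, combine_aux, combine_aux, smul_sandwich]
  congr 2
  have h3 : x (f i) (p i) * x (f i') (p i') = x (f i') (p i') * x (f i) (p i) :=
    hrel3 (f i') (f i) (p i') (p i) hf hpi
  have h4 : x (f i) (p i') * x (f i') (p i) =
      x (f i') (p i) * x (f i) (p i') + (q - q⁻¹) • (x (f i') (p i') * x (f i) (p i)) := by
    have h := hrel4 (f i') (f i) (p i') (p i) hf hpi
    rw [sub_eq_iff_eq_add] at h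
    rw [h, add_comm]
  rw [h3, h4]
  have hq' : (-q) ≠ 0 := neg_ne_zero.mpr hq
  have hl : (-q) ^ inversions p ≠ 0 := pow_ne_zero _ hq'
  match_scalars <;> (field_simp; try ring)

end swaps

section drow

variable {k H : Type*} [Field k] [Ring H] [Algebra k H] {N : ℕ}
  (q : k) (x : Fin N → Fin N → H)

lemma Drow_noninj (hq : q ≠ 0)
    (hrel1 : ∀ (i m n : Fin N), n < m → x i m * x i n = q • (x i n * x i m))
    (hrel3 : ∀ (i j m n : Fin N), i < j → n < m → x j n * x i m = x i m * x j n)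
    (hrel4 : ∀ (i j m n : Fin N), i < j → n < m →
      x j m * x i n - x i n * x j m = (q - q⁻¹) • (x i m * x j n))
    (f : Fin N → Fin N) (hf : ¬ Function.Injective f) : Drow q x f = 0 := by
  have key : ∀ d : ℕ, ∀ g : Fin N → Fin N, ∀ a b : Fin N,
      (a : ℕ) + d = (b : ℕ) → 0 < d → g a = g b → Drow q x g = 0 := by
    intro d
    induction d with
    | zero => intro g a b h1 h2; omega
    | succ d ih =>
      intro g a b hab hd hgab
      have ha1 : (a : ℕ) + 1 < N := by have := b.2; omega
      have hb' : b = ⟨(a : ℕ) + 1 + d, by omega⟩ := Fin.ext (by simp; omega)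
      rcases Nat.eq_zero_or_pos d with rfl | hdpos
      · -- adjacent
        apply Drow_adj_zero q x hq hrel1 (a : ℕ) ha1 g
        have : (⟨(a : ℕ), Nat.lt_of_succ_lt ha1⟩ : Fin N) = a := Fin.ext rfl
        rw [this]
        have : (⟨(a : ℕ) + 1, ha1⟩ : Fin N) = b := Fin.ext (by simp; omega)
        rw [this]
        exact hgab
      · set i : Fin N := ⟨(a : ℕ), Nat.lt_of_succ_lt ha1⟩ with hidef
        set i' : Fin N := ⟨(a : ℕ) + 1, ha1⟩ with hi'def
        have hia : i = a := Fin.ext rfl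
        set s := Equiv.swap i i' with hs
        have hsb : s b = b := by
          apply Equiv.swap_apply_of_ne_of_ne
          · rw [Ne, Fin.ext_iff]; simp only [hidef, hi'def, Fin.val_mk]; omega
          · rw [Ne, Fin.ext_iff]; simp only [hidef, hi'def, Fin.val_mk]; omega
        have hcomp : Drow q x ((g ∘ s) ∘ s) = Drow q x g := by
          congr 1
          funext j
          simp [Function.comp_apply, hs, Equiv.swap_apply_self]
        have hnext : Drow q x (g ∘ s) = 0 := by
          apply ih (g ∘ s) i' b
          · simp [hi'def]; omega
          · exact hdpos
          · have h1 : (g ∘ s) i' = g a := by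
              rw [Function.comp_apply, hs, Equiv.swap_apply_right, hia]
            have h2 : (g ∘ s) b = g b := by rw [Function.comp_apply, hsb]
            rw [h1, h2, hgab]
        rcases eq_or_ne (g i) (g i') with he | hne
        · exact Drow_adj_zero q x hq hrel1 (a : ℕ) ha1 g he
        · rcases lt_or_gt_of_ne hne with hlt | hgt
          · -- g i < g i' : descend applied to g ∘ s
            have hd2 : (g ∘ s) ⟨(a : ℕ) + 1, ha1⟩ < (g ∘ s) ⟨(a : ℕ), Nat.lt_of_succ_lt ha1⟩ := by
              show (g ∘ s) i' < (g ∘ s) i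
              rw [Function.comp_apply, Function.comp_apply, hs,
                Equiv.swap_apply_left, Equiv.swap_apply_right]
              exact hlt
            have := Drow_adj_descend q x hq hrel3 hrel4 (a : ℕ) ha1 (g ∘ s) hd2
            rw [hcomp] at this
            rw [hnext] at this
            calc Drow q x g = (-q) • ((-q)⁻¹ • Drow q x g) := by
                  rw [smul_smul, mul_inv_cancel₀ (neg_ne_zero.mpr hq), one_smul]
              _ = (-q) • (0 : H) := by rw [← this]
              _ = 0 := smul_zero _
          · -- g i' < g i : descend applied to g
            have hd2 : g ⟨(a : ℕ) + 1, ha1⟩ < g ⟨(a : ℕ), Nat.lt_of_succ_lt ha1⟩ := hgt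
            rw [Drow_adj_descend q x hq hrel3 hrel4 (a : ℕ) ha1 g hd2, hnext, smul_zero]
  rw [Function.not_injective_iff] at hf
  obtain ⟨a, b, hab, hne⟩ := hf
  rcases lt_or_gt_of_ne hne with h | h
  · exact key ((b : ℕ) - (a : ℕ)) f a b (by have := Fin.lt_def.mp h; omega)
      (by have := Fin.lt_def.mp h; omega) hab
  · exact key ((a : ℕ) - (b : ℕ)) f b a (by have := Fin.lt_def.mp h; omega)
      (by have := Fin.lt_def.mp h; omega) hab.symm

lemma Drow_perm (hq : q ≠ 0)
    (hrel3 : ∀ (i j m n : Fin N), i < j → n < m → x j n * x i m = x i m * x j n)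
    (hrel4 : ∀ (i j m n : Fin N), i < j → n < m →
      x j m * x i n - x i n * x j m = (q - q⁻¹) • (x i m * x j n))
    (τ : Equiv.Perm (Fin N)) :
    Drow q x ⇑τ = (((-q) ^ inversions τ)⁻¹ : k) • Drow q x id := by
  have main : ∀ m : ℕ, ∀ τ : Equiv.Perm (Fin N), inversions τ = m →
      Drow q x ⇑τ = (((-q) ^ inversions τ)⁻¹ : k) • Drow q x id := by
    intro m
    induction m using Nat.strong_induction_on with
    | _ m ih =>
      intro τ hτm
      by_cases hdesc : ∃ a, ∃ ha : a + 1 < N, τ ⟨a + 1, ha⟩ < τ ⟨a, Nat.lt_of_succ_lt ha⟩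
      · obtain ⟨a, ha, hd⟩ := hdesc
        set i : Fin N := ⟨a, Nat.lt_of_succ_lt ha⟩ with hidef
        set i' : Fin N := ⟨a + 1, ha⟩ with hi'def
        set s := Equiv.swap i i' with hs
        set τ' := τ * s with hτ'
        have hcoe : ⇑τ ∘ ⇑s = ⇑τ' := by
          funext j; simp [hτ', Equiv.Perm.mul_apply]
        have hτs : τ' * s = τ := by
          rw [hτ', mul_assoc, hs, Equiv.swap_mul_self, mul_one]
        have hτ'lt : τ' i < τ' i' := by
          have h1 : τ' i = τ i' := by rw [hτ', Equiv.Perm.mul_apply, hs, Equiv.swap_apply_left]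
          have h2 : τ' i' = τ i := by rw [hτ', Equiv.Perm.mul_apply, hs, Equiv.swap_apply_right]
          rw [h1, h2]; exact hd
        have hinv : inversions τ = inversions τ' + 1 := by
          rw [← hτs]
          exact inversions_mul_swap a ha τ' hτ'lt
        have hstep := Drow_adj_descend q x hq hrel3 hrel4 a ha ⇑τ hd
        rw [hcoe] at hstep
        have hrec := ih (inversions τ') (by omega) τ' rfl
        rw [hstep, hrec, smul_smul, hinv, pow_succ, mul_inv_rev]
      · push_neg at hdesc
        have : τ = 1 := by
          apply perm_eq_one_of_no_descent
          intro a ha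
          rcases lt_or_eq_of_le (hdesc a ha) with h | h
          · exact h
          · exact absurd (τ.injective h) (Fin.ne_of_val_ne (by simp))
        subst this
        rw [inversions_one, pow_zero, inv_one, one_smul]
        congr 1
  exact main (inversions τ) τ rfl

end drow

section coalg

variable {k H : Type*} [Field k] [Ring H] [Bialgebra k H] {N : ℕ} (x : Fin N → Fin N → H)

lemma comul_prod
    (hcomul : ∀ i j : Fin N, Coalgebra.comul (R := k) (x i j) = ∑ l : Fin N, x i l ⊗ₜ[k] x l j) :
    ∀ (n : ℕ) (r c : Fin n → Fin N),
      Coalgebra.comul (R := k) ((List.ofFn fun j => x (r j) (c j)).prod) =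
        ∑ f : Fin n → Fin N,
          ((List.ofFn fun j => x (r j) (f j)).prod ⊗ₜ[k] (List.ofFn fun j => x (f j) (c j)).prod) := by
  intro n
  induction n with
  | zero =>
    intro r c
    rw [List.ofFn_zero, List.prod_nil, Bialgebra.comul_one, Fintype.sum_unique]
    simp [Algebra.TensorProduct.one_def]
  | succ n ihn =>
    intro r c
    rw [List.ofFn_succ, List.prod_cons, Bialgebra.comul_mul, hcomul (r 0) (c 0),
      ihn (fun j => r j.succ) (fun j => c j.succ), Finset.sum_mul_sum]
    have hre : (∑ f : Fin (n + 1) → Fin N,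
        ((List.ofFn fun j => x (r j) (f j)).prod ⊗ₜ[k] (List.ofFn fun j => x (f j) (c j)).prod)) =
        ∑ lg : Fin N × (Fin n → Fin N),
          ((x (r 0) lg.1 * (List.ofFn fun j => x (r j.succ) (lg.2 j)).prod) ⊗ₜ[k]
            (x lg.1 (c 0) * (List.ofFn fun j => x (lg.2 j) (c j.succ)).prod)) := by
    -- reindex by pairs
      refine (Fintype.sum_equiv (Fin.consEquiv (fun _ => Fin N)) _ _ ?_).symm
      intro lg
      rw [List.ofFn_succ, List.prod_cons, List.ofFn_succ,
        List.prod_cons]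
      simp only [Fin.consEquiv_apply, Fin.cons_zero, Fin.cons_succ]
    rw [hre, Fintype.sum_prod_type]
    apply Finset.sum_congr rfl
    intro l _
    apply Finset.sum_congr rfl
    intro g _
    rw [Algebra.TensorProduct.tmul_mul_tmul]

lemma counit_prod
    (hcounit : ∀ i j : Fin N, Coalgebra.counit (R := k) (x i j) = if i = j then (1 : k) else 0) :
    ∀ (L : List (Fin N × Fin N)),
      Coalgebra.counit (R := k) ((L.map fun ij => x ij.1 ij.2).prod) =
        (L.map fun ij => if ij.1 = ij.2 then (1 : k) else 0).prod := by
  intro L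
  induction L with
  | nil => simp
  | cons ij L ihL =>
    rw [List.map_cons, List.prod_cons, Bialgebra.counit_mul, hcounit, ihL,
      List.map_cons, List.prod_cons]

lemma qmono_eq_list (f g : Fin N → Fin N) :
    qmono x f g =
      ((((List.finRange N).map fun j => (f j, g j))).map fun ij => x ij.1 ij.2).prod := by
  rw [qmono, List.ofFn_eq_map, List.map_map]
  rfl

end coalg

section grouplike

variable {k H : Type*} [Field k] [Ring H] [Bialgebra k H] {N : ℕ}
  (q : k) (x : Fin N → Fin N → H)

lemma comul_Drow_id (hq : q ≠ 0)
    (hrel1 : ∀ (i m n : Fin N), n < m → x i m * x i n = q • (x i n * x i m))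
    (hrel3 : ∀ (i j m n : Fin N), i < j → n < m → x j n * x i m = x i m * x j n)
    (hrel4 : ∀ (i j m n : Fin N), i < j → n < m →
      x j m * x i n - x i n * x j m = (q - q⁻¹) • (x i m * x j n))
    (hcomul : ∀ i j : Fin N, Coalgebra.comul (R := k) (x i j) = ∑ l : Fin N, x i l ⊗ₜ[k] x l j) :
    Coalgebra.comul (R := k) (Drow q x id) = Drow q x id ⊗ₜ[k] Drow q x id := by
  classical
  have key : Coalgebra.comul (R := k) (Drow q x id) =
      ∑ f : Fin N → Fin N, qmono x id f ⊗ₜ[k] Drow q x f := by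
    simp only [Drow, qmono, map_sum, map_smul]
    simp_rw [comul_prod x hcomul N id, Finset.smul_sum, ← TensorProduct.tmul_smul]
    rw [Finset.sum_comm]
    apply Finset.sum_congr rfl
    intro f _
    rw [← TensorProduct.tmul_sum]
  rw [key]
  have hfilter : ∑ f : Fin N → Fin N, qmono x id f ⊗ₜ[k] Drow q x f =
      ∑ f ∈ Finset.univ.filter (fun f : Fin N → Fin N => Function.Injective f),
        qmono x id f ⊗ₜ[k] Drow q x f := by
    symm
    apply Finset.sum_filter_of_ne
    intro f _ hne
    by_contra hni
    rw [Drow_noninj q x hq hrel1 hrel3 hrel4 f hni, TensorProduct.tmul_zero] at hne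
    exact hne rfl
  rw [hfilter]
  have hbij : ∑ f ∈ Finset.univ.filter (fun f : Fin N → Fin N => Function.Injective f),
      qmono x id f ⊗ₜ[k] Drow q x f =
      ∑ τ : Equiv.Perm (Fin N), qmono x id ⇑τ ⊗ₜ[k] Drow q x ⇑τ := by
    refine Finset.sum_bij'
      (fun f hf => Equiv.ofBijective f
        (Finite.injective_iff_bijective.mp (Finset.mem_filter.mp hf).2))
      (fun τ _ => ⇑τ) (fun f hf => Finset.mem_univ _) ?_ ?_ ?_ ?_
    · intro τ _
      rw [Finset.mem_filter]
      exact ⟨Finset.mem_univ _, τ.injective⟩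
    · intro f hf
      rfl
    · intro τ _
      exact Equiv.ext fun j => rfl
    · intro f hf
      rfl
  rw [hbij]
  have hterm : ∀ τ : Equiv.Perm (Fin N),
      qmono x id ⇑τ ⊗ₜ[k] Drow q x ⇑τ =
        ((((-q) ^ inversions τ)⁻¹ : k) • qmono x id ⇑τ) ⊗ₜ[k] Drow q x id := by
    intro τ
    rw [Drow_perm q x hq hrel3 hrel4 τ, TensorProduct.tmul_smul, TensorProduct.smul_tmul']
  simp_rw [hterm]
  rw [← TensorProduct.sum_tmul]
  rfl

lemma counit_Drow_id
    (hcounit : ∀ i j : Fin N, Coalgebra.counit (R := k) (x i j) = if i = j then (1 : k) else 0) :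
    Coalgebra.counit (R := k) (Drow q x id) = 1 := by
  classical
  simp only [Drow, map_sum, map_smul, smul_eq_mul]
  have hval : ∀ p : Equiv.Perm (Fin N),
      Coalgebra.counit (R := k) (qmono x id ⇑p) =
        if p = 1 then (1 : k) else 0 := by
    intro p
    rw [qmono_eq_list, counit_prod x hcounit, List.map_map]
    by_cases hp : p = 1
    · subst hp
      rw [if_pos rfl]
      apply List.prod_eq_one
      intro a ha
      rw [List.mem_map] at ha
      obtain ⟨j, _, rfl⟩ := ha
      simp
    · rw [if_neg hp]
      have : ∃ j : Fin N, p j ≠ j := by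
        by_contra hc
        push_neg at hc
        exact hp (Equiv.ext fun j => hc j)
      obtain ⟨j, hj⟩ := this
      apply List.prod_eq_zero
      rw [List.mem_map]
      refine ⟨j, List.mem_finRange j, ?_⟩
      simp only [Function.comp_apply, id_eq]
      rw [if_neg (fun h => hj h.symm)]
  simp_rw [hval, mul_ite, mul_one, mul_zero]
  rw [Finset.sum_ite_eq' Finset.univ (1 : Equiv.Perm (Fin N))
    (fun p => ((-q) ^ inversions p)⁻¹)]
  rw [if_pos (Finset.mem_univ _), inversions_one, pow_zero, inv_one]

end grouplike

section sigma

variable {k H : Type*} [Field k] [Ring H] [Bialgebra k H] {N : ℕ}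
  (q z : k) (x : Fin N → Fin N → H) (σ : H →ₗ[k] H →ₗ[k] k)

lemma sigma_expand_right
    (hσ1 : ∀ a b c : H, σ (a * b) c = conv (σ a) (σ b) c)
    (hcomul : ∀ i j : Fin N, Coalgebra.comul (R := k) (x i j) = ∑ l : Fin N, x i l ⊗ₜ[k] x l j)
    (g h : H) (s t : Fin N) :
    σ (g * h) (x s t) = ∑ l : Fin N, σ g (x s l) * σ h (x l t) := by
  rw [hσ1 g h (x s t), conv, LinearMap.comp_apply, LinearMap.comp_apply, hcomul, map_sum,
    map_sum]
  apply Finset.sum_congr rfl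
  intro l _
  rw [TensorProduct.map_tmul, LinearMap.mul'_apply]

lemma sigma_expand_left
    (hσ2 : ∀ c a b : H, σ c (a * b) = conv (σ.flip b) (σ.flip a) c)
    (hcomul : ∀ i j : Fin N, Coalgebra.comul (R := k) (x i j) = ∑ l : Fin N, x i l ⊗ₜ[k] x l j)
    (g h : H) (s t : Fin N) :
    σ (x s t) (g * h) = ∑ l : Fin N, σ (x s l) h * σ (x l t) g := by
  rw [hσ2 (x s t) g h, conv, LinearMap.comp_apply, LinearMap.comp_apply, hcomul, map_sum,
    map_sum]
  apply Finset.sum_congr rfl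
  intro l _
  rw [TensorProduct.map_tmul, LinearMap.mul'_apply, LinearMap.flip_apply, LinearMap.flip_apply]

lemma sigma_gen_right_zero
    (hσv4 : ∀ i j s t : Fin N, ¬(i = j ∧ s = t) → ¬(i < j ∧ s = j ∧ t = i) →
      σ (x i j) (x s t) = 0)
    (i j : Fin N) (hij : j < i) (s t : Fin N) : σ (x i j) (x s t) = 0 := by
  apply hσv4
  · rintro ⟨rfl, -⟩; exact lt_irrefl _ hij
  · rintro ⟨h, -, -⟩; exact lt_asymm h hij

lemma sigma_gen_left_zero
    (hσv4 : ∀ i j s t : Fin N, ¬(i = j ∧ s = t) → ¬(i < j ∧ s = j ∧ t = i) →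
      σ (x i j) (x s t) = 0)
    (i j : Fin N) (hij : i < j) (s t : Fin N) : σ (x s t) (x i j) = 0 := by
  apply hσv4
  · rintro ⟨-, rfl, rfl⟩; exact lt_irrefl _ hij
  · rintro ⟨h, rfl, rfl⟩; exact lt_asymm h hij

lemma sigma_diag_val
    (hσv1 : ∀ i : Fin N, σ (x i i) (x i i) = z * q)
    (hσv2 : ∀ i j : Fin N, i ≠ j → σ (x i i) (x j j) = z)
    (hσv4 : ∀ i j s t : Fin N, ¬(i = j ∧ s = t) → ¬(i < j ∧ s = j ∧ t = i) →
      σ (x i j) (x s t) = 0)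
    (i s l : Fin N) :
    σ (x i i) (x s l) = if s = l then z * (if i = s then q else 1) else 0 := by
  by_cases hsl : s = l
  · subst hsl
    by_cases his : i = s
    · subst his
      rw [if_pos rfl, if_pos rfl, hσv1]
    · rw [if_pos rfl, if_neg his, mul_one, hσv2 i s his]
  · rw [if_neg hsl]
    apply hσv4
    · rintro ⟨-, h⟩; exact hsl h
    · rintro ⟨h, -, -⟩; exact lt_irrefl _ h

lemma sigma_diag_val'
    (hσv1 : ∀ i : Fin N, σ (x i i) (x i i) = z * q)
    (hσv2 : ∀ i j : Fin N, i ≠ j → σ (x i i) (x j j) = z)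
    (hσv4 : ∀ i j s t : Fin N, ¬(i = j ∧ s = t) → ¬(i < j ∧ s = j ∧ t = i) →
      σ (x i j) (x s t) = 0)
    (i l t : Fin N) :
    σ (x l t) (x i i) = if l = t then z * (if i = t then q else 1) else 0 := by
  by_cases hlt : l = t
  · subst hlt
    by_cases hit : i = l
    · subst hit
      rw [if_pos rfl, if_pos rfl, hσv1]
    · rw [if_pos rfl, if_neg hit, mul_one, hσv2 l i (Ne.symm hit)]
  · rw [if_neg hlt]
    apply hσv4
    · rintro ⟨h, -⟩; exact hlt h
    · rintro ⟨h, rfl, rfl⟩; exact lt_irrefl _ h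

lemma sigma_right_zero_of_bad
    (hσ1 : ∀ a b c : H, σ (a * b) c = conv (σ a) (σ b) c)
    (hcomul : ∀ i j : Fin N, Coalgebra.comul (R := k) (x i j) = ∑ l : Fin N, x i l ⊗ₜ[k] x l j)
    (hσv4 : ∀ i j s t : Fin N, ¬(i = j ∧ s = t) → ¬(i < j ∧ s = j ∧ t = i) →
      σ (x i j) (x s t) = 0) :
    ∀ L : List (Fin N × Fin N), (∃ ij ∈ L, ij.2 < ij.1) → ∀ s t : Fin N,
      σ ((L.map fun ij => x ij.1 ij.2).prod) (x s t) = 0 := by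
  intro L
  induction L with
  | nil => rintro ⟨ij, hmem, -⟩; exact absurd hmem List.not_mem_nil
  | cons ij L ih =>
    rintro ⟨uv, huv, hbad⟩ s t
    rw [List.map_cons, List.prod_cons,
      sigma_expand_right x σ hσ1 hcomul _ _ s t]
    rcases List.mem_cons.mp huv with rfl | hmem
    · apply Finset.sum_eq_zero
      intro l _
      rw [sigma_gen_right_zero x σ hσv4 uv.1 uv.2 hbad s l, zero_mul]
    · apply Finset.sum_eq_zero
      intro l _
      rw [ih ⟨uv, hmem, hbad⟩ l t, mul_zero]

lemma sigma_left_zero_of_bad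
    (hσ2 : ∀ c a b : H, σ c (a * b) = conv (σ.flip b) (σ.flip a) c)
    (hcomul : ∀ i j : Fin N, Coalgebra.comul (R := k) (x i j) = ∑ l : Fin N, x i l ⊗ₜ[k] x l j)
    (hσv4 : ∀ i j s t : Fin N, ¬(i = j ∧ s = t) → ¬(i < j ∧ s = j ∧ t = i) →
      σ (x i j) (x s t) = 0) :
    ∀ L : List (Fin N × Fin N), (∃ ij ∈ L, ij.1 < ij.2) → ∀ s t : Fin N,
      σ (x s t) ((L.map fun ij => x ij.1 ij.2).prod) = 0 := by
  intro L
  induction L with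
  | nil => rintro ⟨ij, hmem, -⟩; exact absurd hmem List.not_mem_nil
  | cons ij L ih =>
    rintro ⟨uv, huv, hbad⟩ s t
    rw [List.map_cons, List.prod_cons,
      sigma_expand_left x σ hσ2 hcomul _ _ s t]
    rcases List.mem_cons.mp huv with rfl | hmem
    · apply Finset.sum_eq_zero
      intro l _
      rw [sigma_gen_left_zero x σ hσv4 uv.1 uv.2 hbad l t, mul_zero]
    · apply Finset.sum_eq_zero
      intro l _
      rw [ih ⟨uv, hmem, hbad⟩ s l, zero_mul]

lemma sigma_right_diag
    (hσ1 : ∀ a b c : H, σ (a * b) c = conv (σ a) (σ b) c)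
    (hσ3 : ∀ h : H, σ 1 h = Coalgebra.counit h ∧ σ h 1 = Coalgebra.counit h)
    (hcomul : ∀ i j : Fin N, Coalgebra.comul (R := k) (x i j) = ∑ l : Fin N, x i l ⊗ₜ[k] x l j)
    (hcounit : ∀ i j : Fin N, Coalgebra.counit (R := k) (x i j) = if i = j then (1 : k) else 0)
    (hσv1 : ∀ i : Fin N, σ (x i i) (x i i) = z * q)
    (hσv2 : ∀ i j : Fin N, i ≠ j → σ (x i i) (x j j) = z)
    (hσv4 : ∀ i j s t : Fin N, ¬(i = j ∧ s = t) → ¬(i < j ∧ s = j ∧ t = i) →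
      σ (x i j) (x s t) = 0) :
    ∀ L : List (Fin N), ∀ s t : Fin N,
      σ ((L.map fun i => x i i).prod) (x s t) =
        (L.map fun i => z * if i = s then q else 1).prod * (if s = t then 1 else 0) := by
  intro L
  induction L with
  | nil =>
    intro s t
    rw [List.map_nil, List.prod_nil, (hσ3 (x s t)).1, hcounit, List.map_nil, List.prod_nil,
      one_mul]
  | cons i0 L ih =>
    intro s t
    rw [List.map_cons, List.prod_cons, sigma_expand_right x σ hσ1 hcomul _ _ s t]
    have hv : ∀ l : Fin N, σ (x i0 i0) (x s l) * σ ((L.map fun i => x i i).prod) (x l t) =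
        if s = l then (z * if i0 = s then q else 1) * σ ((L.map fun i => x i i).prod) (x l t)
        else 0 := by
      intro l
      rw [sigma_diag_val q z x σ hσv1 hσv2 hσv4 i0 s l, ite_mul, zero_mul]
    simp_rw [hv]
    rw [Finset.sum_ite_eq Finset.univ s
      (fun l => (z * if i0 = s then q else 1) * σ ((L.map fun i => x i i).prod) (x l t)),
      if_pos (Finset.mem_univ s), ih s t, List.map_cons, List.prod_cons]
    ring

lemma sigma_left_diag
    (hσ2 : ∀ c a b : H, σ c (a * b) = conv (σ.flip b) (σ.flip a) c)
    (hσ3 : ∀ h : H, σ 1 h = Coalgebra.counit h ∧ σ h 1 = Coalgebra.counit h)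
    (hcomul : ∀ i j : Fin N, Coalgebra.comul (R := k) (x i j) = ∑ l : Fin N, x i l ⊗ₜ[k] x l j)
    (hcounit : ∀ i j : Fin N, Coalgebra.counit (R := k) (x i j) = if i = j then (1 : k) else 0)
    (hσv1 : ∀ i : Fin N, σ (x i i) (x i i) = z * q)
    (hσv2 : ∀ i j : Fin N, i ≠ j → σ (x i i) (x j j) = z)
    (hσv4 : ∀ i j s t : Fin N, ¬(i = j ∧ s = t) → ¬(i < j ∧ s = j ∧ t = i) →
      σ (x i j) (x s t) = 0) :
    ∀ L : List (Fin N), ∀ s t : Fin N,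
      σ (x s t) ((L.map fun i => x i i).prod) =
        (L.map fun i => z * if i = t then q else 1).prod * (if s = t then 1 else 0) := by
  intro L
  induction L with
  | nil =>
    intro s t
    rw [List.map_nil, List.prod_nil, (hσ3 (x s t)).2, hcounit, List.map_nil, List.prod_nil,
      one_mul]
  | cons i0 L ih =>
    intro s t
    rw [List.map_cons, List.prod_cons, sigma_expand_left x σ hσ2 hcomul _ _ s t]
    have hv : ∀ l : Fin N, σ (x s l) ((L.map fun i => x i i).prod) * σ (x l t) (x i0 i0) =
        if l = t then σ (x s l) ((L.map fun i => x i i).prod) * (z * if i0 = t then q else 1)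
        else 0 := by
      intro l
      rw [sigma_diag_val' q z x σ hσv1 hσv2 hσv4 i0 l t, mul_ite, mul_zero]
    simp_rw [hv]
    rw [Finset.sum_ite_eq' Finset.univ t
      (fun l => σ (x s l) ((L.map fun i => x i i).prod) * (z * if i0 = t then q else 1)),
      if_pos (Finset.mem_univ t), ih s t, List.map_cons, List.prod_cons]
    ring

end sigma

section final

variable {k H : Type*} [Field k] [Ring H] [Bialgebra k H] {N : ℕ}
  (q z : k) (x : Fin N → Fin N → H) (σ : H →ₗ[k] H →ₗ[k] k)

lemma detq_eq_Drow : detq q N x = Drow q x id := by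
  rw [detq, Drow]
  apply Finset.sum_congr rfl
  intro p _
  rw [qmono, List.ofFn_eq_map]
  rfl

lemma qmono_one_eq : qmono x id ⇑(1 : Equiv.Perm (Fin N)) =
    ((List.finRange N).map fun i => x i i).prod := by
  rw [qmono, List.ofFn_eq_map]
  rfl

lemma sigma_Drow_gen (hq : q ≠ 0) (hz : z ^ N = q⁻¹)
    (hσ1 : ∀ a b c : H, σ (a * b) c = conv (σ a) (σ b) c)
    (hσ3 : ∀ h : H, σ 1 h = Coalgebra.counit h ∧ σ h 1 = Coalgebra.counit h)
    (hcomul : ∀ i j : Fin N, Coalgebra.comul (R := k) (x i j) = ∑ l : Fin N, x i l ⊗ₜ[k] x l j)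
    (hcounit : ∀ i j : Fin N, Coalgebra.counit (R := k) (x i j) = if i = j then (1 : k) else 0)
    (hσv1 : ∀ i : Fin N, σ (x i i) (x i i) = z * q)
    (hσv2 : ∀ i j : Fin N, i ≠ j → σ (x i i) (x j j) = z)
    (hσv4 : ∀ i j s t : Fin N, ¬(i = j ∧ s = t) → ¬(i < j ∧ s = j ∧ t = i) →
      σ (x i j) (x s t) = 0)
    (s t : Fin N) :
    σ (Drow q x id) (x s t) = if s = t then 1 else 0 := by
  classical
  rw [Drow, map_sum, LinearMap.sum_apply]
  have hterm : ∀ p : Equiv.Perm (Fin N),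
      (σ ((((-q) ^ inversions p)⁻¹ : k) • qmono x id ⇑p)) (x s t) =
        if p = 1 then (if s = t then (1 : k) else 0) else 0 := by
    intro p
    rw [map_smul, LinearMap.smul_apply, smul_eq_mul]
    by_cases hp : p = 1
    · subst hp
      rw [if_pos rfl, inversions_one, pow_zero, inv_one, one_mul, qmono_one_eq,
        sigma_right_diag q z x σ hσ1 hσ3 hcomul hcounit hσv1 hσv2 hσv4 (List.finRange N) s t]
      have hprod : ((List.finRange N).map fun i => z * if i = s then q else 1).prod =
          z ^ N * q := by
        rw [← Fin.prod_univ_def, Finset.prod_mul_distrib, Finset.prod_const,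
          Finset.card_univ, Fintype.card_fin,
          Finset.prod_ite_eq' Finset.univ s (fun _ => q), if_pos (Finset.mem_univ s)]
      rw [hprod, hz, inv_mul_cancel₀ hq, one_mul]
    · rw [if_neg hp]
      have hex : ∃ i : Fin N, p i < i := by
        by_contra hc
        push_neg at hc
        exact hp (perm_eq_one_of_ge p hc)
      obtain ⟨i, hi⟩ := hex
      have hbad : σ (qmono x id ⇑p) (x s t) = 0 := by
        rw [qmono_eq_list]
        apply sigma_right_zero_of_bad x σ hσ1 hcomul hσv4
        exact ⟨(i, p i), by rw [List.mem_map]; exact ⟨i, List.mem_finRange i, rfl⟩, hi⟩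
      rw [hbad, mul_zero]
  simp_rw [hterm]
  rw [Finset.sum_ite_eq' Finset.univ (1 : Equiv.Perm (Fin N))
    (fun _ => if s = t then (1 : k) else 0), if_pos (Finset.mem_univ _)]

lemma sigma_gen_Drow (hq : q ≠ 0) (hz : z ^ N = q⁻¹)
    (hσ2 : ∀ c a b : H, σ c (a * b) = conv (σ.flip b) (σ.flip a) c)
    (hσ3 : ∀ h : H, σ 1 h = Coalgebra.counit h ∧ σ h 1 = Coalgebra.counit h)
    (hcomul : ∀ i j : Fin N, Coalgebra.comul (R := k) (x i j) = ∑ l : Fin N, x i l ⊗ₜ[k] x l j)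
    (hcounit : ∀ i j : Fin N, Coalgebra.counit (R := k) (x i j) = if i = j then (1 : k) else 0)
    (hσv1 : ∀ i : Fin N, σ (x i i) (x i i) = z * q)
    (hσv2 : ∀ i j : Fin N, i ≠ j → σ (x i i) (x j j) = z)
    (hσv4 : ∀ i j s t : Fin N, ¬(i = j ∧ s = t) → ¬(i < j ∧ s = j ∧ t = i) →
      σ (x i j) (x s t) = 0)
    (s t : Fin N) :
    σ (x s t) (Drow q x id) = if s = t then 1 else 0 := by
  classical
  rw [Drow, map_sum]
  have hterm : ∀ p : Equiv.Perm (Fin N),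
      (σ (x s t)) ((((-q) ^ inversions p)⁻¹ : k) • qmono x id ⇑p) =
        if p = 1 then (if s = t then (1 : k) else 0) else 0 := by
    intro p
    rw [map_smul, smul_eq_mul]
    by_cases hp : p = 1
    · subst hp
      rw [if_pos rfl, inversions_one, pow_zero, inv_one, one_mul, qmono_one_eq,
        sigma_left_diag q z x σ hσ2 hσ3 hcomul hcounit hσv1 hσv2 hσv4 (List.finRange N) s t]
      have hprod : ((List.finRange N).map fun i => z * if i = t then q else 1).prod =
          z ^ N * q := by
        rw [← Fin.prod_univ_def, Finset.prod_mul_distrib, Finset.prod_const,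
          Finset.card_univ, Fintype.card_fin,
          Finset.prod_ite_eq' Finset.univ t (fun _ => q), if_pos (Finset.mem_univ t)]
      rw [hprod, hz, inv_mul_cancel₀ hq, one_mul]
    · rw [if_neg hp]
      have hex : ∃ i : Fin N, i < p i := by
        by_contra hc
        push_neg at hc
        exact hp (perm_eq_one_of_le p hc)
      obtain ⟨i, hi⟩ := hex
      have hbad : σ (x s t) (qmono x id ⇑p) = 0 := by
        rw [qmono_eq_list]
        apply sigma_left_zero_of_bad x σ hσ2 hcomul hσv4
        exact ⟨(i, p i), by rw [List.mem_map]; exact ⟨i, List.mem_finRange i, rfl⟩, hi⟩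
      rw [hbad, mul_zero]
  simp_rw [hterm]
  rw [Finset.sum_ite_eq' Finset.univ (1 : Equiv.Perm (Fin N))
    (fun _ => if s = t then (1 : k) else 0), if_pos (Finset.mem_univ _)]

end final

/-- in `M_q(N)` with the skew pairing `σ` determined on generators by
`σ(x_{ii}, x_{ii}) = zq`, `σ(x_{ii}, x_{jj}) = z` (i ≠ j),
`σ(x_{ij}, x_{ji}) = z(q − q⁻¹)` (i < j) and `0` otherwise (with `z^N = q⁻¹`), one has
`σ(det_q, h) = σ(h, det_q) = ε(h)` for all `h`. -/
theorem statement17 {k H : Type*} [Field k] [Ring H] [Bialgebra k H]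
    (N : ℕ) (q z : k) (hq : q ≠ 0) (hz : z ^ N = q⁻¹)
    (x : Fin N → Fin N → H)
    -- the defining relations of M_q(N)
    (hrel1 : ∀ (i m n : Fin N), n < m → x i m * x i n = q • (x i n * x i m))
    (hrel2 : ∀ (i j m : Fin N), i < j → x j m * x i m = q • (x i m * x j m))
    (hrel3 : ∀ (i j m n : Fin N), i < j → n < m → x j n * x i m = x i m * x j n)
    (hrel4 : ∀ (i j m n : Fin N), i < j → n < m →
      x j m * x i n - x i n * x j m = (q - q⁻¹) • (x i m * x j n))
    -- the comatrix coalgebra structure on the generators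
    (hcomul : ∀ i j : Fin N,
      Coalgebra.comul (R := k) (x i j) = ∑ l : Fin N, x i l ⊗ₜ[k] x l j)
    (hcounit : ∀ i j : Fin N,
      Coalgebra.counit (R := k) (x i j) = if i = j then (1 : k) else 0)
    -- the generators generate H as an algebra
    (hgen : Algebra.adjoin k (Set.range fun ij : Fin N × Fin N => x ij.1 ij.2) = ⊤)
    -- σ is a skew pairing
    (σ : H →ₗ[k] H →ₗ[k] k)
    (hσ1 : ∀ a b c : H, σ (a * b) c = conv (σ a) (σ b) c)
    (hσ2 : ∀ c a b : H, σ c (a * b) = conv (σ.flip b) (σ.flip a) c)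
    (hσ3 : ∀ h : H, σ 1 h = Coalgebra.counit h ∧ σ h 1 = Coalgebra.counit h)
    -- values of σ on generators
    (hσv1 : ∀ i : Fin N, σ (x i i) (x i i) = z * q)
    (hσv2 : ∀ i j : Fin N, i ≠ j → σ (x i i) (x j j) = z)
    (hσv3 : ∀ i j : Fin N, i < j → σ (x i j) (x j i) = z * (q - q⁻¹))
    (hσv4 : ∀ i j s t : Fin N, ¬(i = j ∧ s = t) → ¬(i < j ∧ s = j ∧ t = i) →
      σ (x i j) (x s t) = 0) :
    ∀ h : H, σ (detq q N x) h = Coalgebra.counit h ∧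
      σ h (detq q N x) = Coalgebra.counit h := by
  intro h
  classical
  have hD : detq q N x = Drow q x id := detq_eq_Drow q x
  have hcm : Coalgebra.comul (R := k) (detq q N x) = detq q N x ⊗ₜ[k] detq q N x := by
    rw [hD]; exact comul_Drow_id q x hq hrel1 hrel3 hrel4 hcomul
  have hcu : Coalgebra.counit (R := k) (detq q N x) = 1 := by
    rw [hD]; exact counit_Drow_id q x hcounit
  have hg1 : ∀ s t : Fin N, σ (detq q N x) (x s t) = if s = t then 1 else 0 := by
    intro s t
    rw [hD]
    exact sigma_Drow_gen q z x σ hq hz hσ1 hσ3 hcomul hcounit hσv1 hσv2 hσv4 s t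
  have hg2 : ∀ s t : Fin N, σ (x s t) (detq q N x) = if s = t then 1 else 0 := by
    intro s t
    rw [hD]
    exact sigma_gen_Drow q z x σ hq hz hσ2 hσ3 hcomul hcounit hσv1 hσv2 hσv4 s t
  have hmem : h ∈ Algebra.adjoin k (Set.range fun ij : Fin N × Fin N => x ij.1 ij.2) := by
    rw [hgen]; exact Algebra.mem_top
  refine Algebra.adjoin_induction
    (p := fun h _ => σ (detq q N x) h = Coalgebra.counit h ∧
      σ h (detq q N x) = Coalgebra.counit h) ?_ ?_ ?_ ?_ hmem
  · rintro y ⟨⟨s, t⟩, rfl⟩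
    exact ⟨by rw [hg1 s t, hcounit], by rw [hg2 s t, hcounit]⟩
  · intro r
    have halg : (algebraMap k H) r = r • (1 : H) := Algebra.algebraMap_eq_smul_one r
    constructor
    · rw [halg, map_smul, map_smul, (hσ3 (detq q N x)).2, hcu, Bialgebra.counit_one]
    · rw [halg, map_smul, map_smul, LinearMap.smul_apply, (hσ3 (detq q N x)).1, hcu,
        Bialgebra.counit_one]
  · intro a b ha hb hpa hpb
    constructor
    · rw [map_add, map_add, hpa.1, hpb.1]
    · rw [map_add, map_add, LinearMap.add_apply, hpa.2, hpb.2]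
  · intro a b ha hb hpa hpb
    constructor
    · rw [hσ2 (detq q N x) a b, conv, LinearMap.comp_apply, LinearMap.comp_apply, hcm,
        TensorProduct.map_tmul, LinearMap.mul'_apply, LinearMap.flip_apply,
        LinearMap.flip_apply, hpb.1, hpa.1, Bialgebra.counit_mul, mul_comm]
    · rw [hσ1 a b (detq q N x), conv, LinearMap.comp_apply, LinearMap.comp_apply, hcm,
        TensorProduct.map_tmul, LinearMap.mul'_apply, hpa.2, hpb.2, Bialgebra.counit_mul]
end
end
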